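/- Completeness of DmbC with respect to swap Kripke models: for every set of formulas Γ ∪ {φ} ⊆ For(Σ), if Γ ⊨_DmbC φ then Γ ⊢_DmbC φ. -/

import Mathlib

/-- Formulas over the signature Σ = {∧, ∨, →, ¬, ∘, O}, with countably many
propositional variables. -/
inductive Form : Type
  | var : ℕ → Form
  | and : Form → Form → Form
  | or : Form → Form → Form
  | imp : Form → Form → Form
  | neg : Form → Form
  | circ : Form → Form
  | obl : Form → Form

namespace Form
/-- ⊥_α := (α ∧ ¬α) ∧ ∘α -/
def bot (α : Form) : Form := (α.and α.neg).and α.circ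
end Form

/-- Theorems of the Hilbert calculus DmbC: CPL⁺ axioms, (EM), (bc), (O-K), (O-E),
with rules Modus Ponens and O-necessitation. -/
inductive ThmDmbC : Form → Prop
  | A1 (α β : Form) : ThmDmbC (α.imp (β.imp α))
  | A2 (α β γ : Form) : ThmDmbC ((α.imp (β.imp γ)).imp ((α.imp β).imp (α.imp γ)))
  | A3 (α β : Form) : ThmDmbC (α.imp (β.imp (α.and β)))
  | A4 (α β : Form) : ThmDmbC ((α.and β).imp α)
  | A5 (α β : Form) : ThmDmbC ((α.and β).imp β)
  | A6 (α β : Form) : ThmDmbC (α.imp (α.or β))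
  | A7 (α β : Form) : ThmDmbC (β.imp (α.or β))
  | A8 (α β γ : Form) : ThmDmbC ((α.imp γ).imp ((β.imp γ).imp ((α.or β).imp γ)))
  | A9 (α β : Form) : ThmDmbC (((α.imp β).imp α).imp α)
  | EM (α : Form) : ThmDmbC (α.or α.neg)
  | bc (α β : Form) : ThmDmbC (α.circ.imp (α.imp (α.neg.imp β)))
  | OK (α β : Form) : ThmDmbC ((α.imp β).obl.imp (α.obl.imp β.obl))
  | OE (α : Form) : ThmDmbC (α.bot.obl.imp α.bot)
  | mp {α β : Form} : ThmDmbC (α.imp β) → ThmDmbC α → ThmDmbC β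
  | nec {α : Form} : ThmDmbC α → ThmDmbC α.obl

/-- conj γ [γ₂,…,γ_k] = γ ∧ γ₂ ∧ … ∧ γ_k -/
def conj (γ : Form) : List Form → Form
  | [] => γ
  | δ :: l => γ.and (conj δ l)

/-- Γ ⊢_DmbC φ iff ⊢ φ or ⊢ (γ₁ ∧ … ∧ γ_k) → φ for some γ₁,…,γ_k ∈ Γ, k ≥ 1. -/
def DerivDmbC (Γ : Set Form) (φ : Form) : Prop :=
  ThmDmbC φ ∨ ∃ (γ : Form) (l : List Form),
    (∀ δ ∈ γ :: l, δ ∈ Γ) ∧ ThmDmbC ((conj γ l).imp φ)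

/-- The three snapshots T = (1,0), t = (1,1), F = (0,1). -/
inductive SV : Type
  | T | t | F
deriving DecidableEq

/-- First coordinate of a snapshot. -/
def SV.p1 : SV → Bool
  | .T => true | .t => true | .F => false

/-- Second coordinate of a snapshot. -/
def SV.p2 : SV → Bool
  | .T => false | .t => true | .F => true

/-- Designated values: D = {T, t}, i.e. first coordinate is 1. -/
def SV.desig (a : SV) : Prop := a.p1 = true

/-- Swap Kripke model conditions for DmbC on a serial frame (W,R) with
valuations v_w : Form → SV. -/
structure IsModelDmbC {W : Type} (R : W → W → Prop) (v : W → Form → SV) : Prop where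
  serial : ∀ w, ∃ w', R w w'
  and_ : ∀ w α β, (v w (α.and β)).p1 = ((v w α).p1 && (v w β).p1)
  or_ : ∀ w α β, (v w (α.or β)).p1 = ((v w α).p1 || (v w β).p1)
  imp_ : ∀ w α β, (v w (α.imp β)).p1 = (!(v w α).p1 || (v w β).p1)
  neg_ : ∀ w α, (v w α.neg).p1 = (v w α).p2
  circ_ : ∀ w α, (v w α.circ).p1 ≤ !((v w α).p1 && (v w α).p2)
  obl_ : ∀ w α, ((v w α.obl).p1 = true ↔ ∀ w', R w w' → (v w' α).p1 = true)

/-- Γ ⊨_DmbC φ : semantic consequence over all swap Kripke models for DmbC. -/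
def SemDmbC (Γ : Set Form) (φ : Form) : Prop :=
  ∀ (W : Type) (R : W → W → Prop) (v : W → Form → SV), Nonempty W →
    IsModelDmbC R v → ∀ w : W, (∀ γ ∈ Γ, (v w γ).desig) → (v w φ).desig

/- ## Auxiliary derivability with a list of hypotheses -/

open Form in
inductive Der : List Form → Form → Prop
  | thm {L φ} : ThmDmbC φ → Der L φ
  | hyp {L φ} : φ ∈ L → Der L φ
  | mp {L} {α β : Form} : Der L (α.imp β) → Der L α → Der L β

namespace Der

theorem weaken {L L' : List Form} {φ : Form} (hs : ∀ δ ∈ L, δ ∈ L') (h : Der L φ) :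
    Der L' φ := by
  induction h with
  | thm h => exact .thm h
  | hyp h => exact .hyp (hs _ h)
  | mp _ _ ih1 ih2 => exact .mp ih1 ih2

theorem thm_id (α : Form) : ThmDmbC (α.imp α) :=
  .mp (.mp (.A2 α (α.imp α) α) (.A1 α (α.imp α))) (.A1 α α)

/-- Deduction theorem. -/
theorem ded {L : List Form} {α φ : Form} (h : Der (α :: L) φ) : Der L (α.imp φ) := by
  induction h with
  | thm h => exact .mp (.thm (.A1 _ α)) (.thm h)
  | hyp h =>
    rcases List.mem_cons.1 h with h | h
    · subst h; exact .thm (thm_id _)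
    · exact .mp (.thm (.A1 _ α)) (.hyp h)
  | mp _ _ ih1 ih2 => exact .mp (.mp (.thm (.A2 _ _ _)) ih1) ih2

theorem of_nil {φ : Form} (h : Der [] φ) : ThmDmbC φ := by
  induction h with
  | thm h => exact h
  | hyp h => simp at h
  | mp _ _ ih1 ih2 => exact .mp ih1 ih2

/-- Cut / substitution of hypotheses. -/
theorem cut {L L' : List Form} {φ : Form} (h : Der L φ) (hs : ∀ δ ∈ L, Der L' δ) :
    Der L' φ := by
  induction h with
  | thm h => exact .thm h
  | hyp h => exact hs _ h
  | mp _ _ ih1 ih2 => exact .mp ih1 ih2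

theorem conj_intro {L : List Form} {γ : Form} {l : List Form}
    (h : ∀ δ ∈ γ :: l, Der L δ) : Der L (conj γ l) := by
  induction l generalizing γ with
  | nil => exact h γ (by simp)
  | cons δ l ih =>
    have h1 : Der L γ := h γ (by simp)
    have h2 : Der L (conj δ l) := ih (fun ε hε => h ε (by
      rcases List.mem_cons.1 hε with h' | h' <;> simp [h']))
    exact .mp (.mp (.thm (.A3 γ (conj δ l))) h1) h2

theorem conj_elim : ∀ {l : List Form} (γ : Form), ∀ δ ∈ γ :: l, Der [conj γ l] δ := by
  intro l
  induction l with
  | nil => intro γ δ hδ; simp at hδ; subst hδ; exact .hyp (by simp [conj])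
  | cons ε l ih =>
    intro γ δ hδ
    have hc : Der [conj γ (ε :: l)] (conj ε l) :=
      .mp (.thm (.A5 γ (conj ε l))) (.hyp (by simp [conj]))
    have hγ : Der [conj γ (ε :: l)] γ :=
      .mp (.thm (.A4 γ (conj ε l))) (.hyp (by simp [conj]))
    rcases List.mem_cons.1 hδ with h | h
    · exact h ▸ hγ
    · exact (ih ε δ h).cut (by intro x hx; simp at hx; subst hx; exact hc)

end Der

/-- A cleaner equivalent of `DerivDmbC`. -/
def Deriv' (Γ : Set Form) (φ : Form) : Prop :=
  ∃ L : List Form, (∀ δ ∈ L, δ ∈ Γ) ∧ Der L φ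

theorem deriv_iff (Γ : Set Form) (φ : Form) : DerivDmbC Γ φ ↔ Deriv' Γ φ := by
  constructor
  · rintro (h | ⟨γ, l, hmem, h⟩)
    · exact ⟨[], by simp, .thm h⟩
    · refine ⟨γ :: l, hmem, .mp (.thm h) (Der.conj_intro fun δ hδ => .hyp hδ)⟩
  · rintro ⟨L, hmem, h⟩
    match L with
    | [] => exact Or.inl h.of_nil
    | γ :: l =>
      refine Or.inr ⟨γ, l, hmem, ?_⟩
      exact (h.cut (Der.conj_elim γ)).ded.of_nil

namespace Deriv'

theorem mono {Γ Γ' : Set Form} {φ : Form} (hs : Γ ⊆ Γ') (h : Deriv' Γ φ) : Deriv' Γ' φ :=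
  let ⟨L, hm, hd⟩ := h; ⟨L, fun δ hδ => hs (hm δ hδ), hd⟩

theorem of_thm {Γ : Set Form} {φ : Form} (h : ThmDmbC φ) : Deriv' Γ φ :=
  ⟨[], by simp, .thm h⟩

theorem of_mem {Γ : Set Form} {φ : Form} (h : φ ∈ Γ) : Deriv' Γ φ :=
  ⟨[φ], by simpa, .hyp (by simp)⟩

theorem mp {Γ : Set Form} {α β : Form} (h1 : Deriv' Γ (α.imp β)) (h2 : Deriv' Γ α) :
    Deriv' Γ β := by
  obtain ⟨L1, hm1, hd1⟩ := h1
  obtain ⟨L2, hm2, hd2⟩ := h2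
  refine ⟨L1 ++ L2, ?_, .mp (hd1.weaken ?_) (hd2.weaken ?_)⟩ <;>
    intro δ hδ <;> simp at hδ ⊢ <;> tauto

theorem mp1 {Γ : Set Form} {α β : Form} (h : ThmDmbC (α.imp β)) (h1 : Deriv' Γ α) :
    Deriv' Γ β := (of_thm h).mp h1

theorem mp2 {Γ : Set Form} {α β γ : Form} (h : ThmDmbC (α.imp (β.imp γ)))
    (h1 : Deriv' Γ α) (h2 : Deriv' Γ β) : Deriv' Γ γ := ((of_thm h).mp h1).mp h2

end Deriv'

/- ## Lindenbaum extension via Zorn -/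

/-- Δ is maximally non-trivial with respect to ψ. -/
structure MaxNT (Δ : Set Form) (ψ : Form) : Prop where
  nd : ¬ Deriv' Δ ψ
  max : ∀ α ∉ Δ, Deriv' (insert α Δ) ψ

theorem chain_list {c : Set (Set Form)} (hc : IsChain (· ⊆ ·) c) (hne : c.Nonempty) :
    ∀ L : List Form, (∀ δ ∈ L, δ ∈ ⋃₀ c) → ∃ s ∈ c, ∀ δ ∈ L, δ ∈ s := by
  intro L
  induction L with
  | nil => intro _; obtain ⟨s, hs⟩ := hne; exact ⟨s, hs, by simp⟩
  | cons γ l ih =>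
    intro h
    obtain ⟨s, hs, hls⟩ := ih (fun δ hδ => h δ (by simp [hδ]))
    obtain ⟨t, ht, hγt⟩ := h γ (by simp)
    rcases hc.total hs ht with hst | hts
    · exact ⟨t, ht, by intro δ hδ; rcases List.mem_cons.1 hδ with h' | h'
                       · exact h' ▸ hγt
                       · exact hst (hls δ h')⟩
    · exact ⟨s, hs, by intro δ hδ; rcases List.mem_cons.1 hδ with h' | h'
                       · exact h' ▸ hts hγt
                       · exact hls δ h'⟩

theorem lindenbaum {Γ : Set Form} {ψ : Form} (h : ¬ Deriv' Γ ψ) :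
    ∃ Δ, Γ ⊆ Δ ∧ MaxNT Δ ψ := by
  obtain ⟨Δ, hΓΔ, hmax⟩ := zorn_subset_nonempty {Δ | ¬ Deriv' Δ ψ}
    (fun c hcS hchain hcne => by
      refine ⟨⋃₀ c, ?_, fun s hs => Set.subset_sUnion_of_mem hs⟩
      rintro ⟨L, hm, hd⟩
      obtain ⟨s, hs, hLs⟩ := chain_list hchain hcne L hm
      exact hcS hs ⟨L, hLs, hd⟩) Γ h
  refine ⟨Δ, hΓΔ, hmax.prop, fun α hα => ?_⟩
  by_contra hnd
  have : insert α Δ ⊆ Δ := hmax.2 hnd (Set.subset_insert α Δ)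
  exact hα (this (Set.mem_insert α Δ))

/- ## Properties of maximal non-trivial theories -/

/-- the positive tautology (α→ψ) → (((α→β)→ψ) → ψ) -/
theorem taut_peirce (α β ψ : Form) :
    ThmDmbC ((α.imp ψ).imp (((α.imp β).imp ψ).imp ψ)) := by
  have d0 : Der [α, ψ.imp β, (α.imp β).imp ψ, α.imp ψ] β := by
    have h1 : Der [α, ψ.imp β, (α.imp β).imp ψ, α.imp ψ] (α.imp ψ) := .hyp (by simp)
    have h2 : Der [α, ψ.imp β, (α.imp β).imp ψ, α.imp ψ] α := .hyp (by simp)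
    have h3 : Der [α, ψ.imp β, (α.imp β).imp ψ, α.imp ψ] (ψ.imp β) := .hyp (by simp)
    exact .mp h3 (.mp h1 h2)
  have d1 : Der [ψ.imp β, (α.imp β).imp ψ, α.imp ψ] (α.imp β) := d0.ded
  have d2 : Der [ψ.imp β, (α.imp β).imp ψ, α.imp ψ] ψ := .mp (.hyp (by simp)) d1
  have d3 : Der [(α.imp β).imp ψ, α.imp ψ] ((ψ.imp β).imp ψ) := d2.ded
  have d4 : Der [(α.imp β).imp ψ, α.imp ψ] ψ := .mp (.thm (.A9 ψ β)) d3
  exact d4.ded.ded.of_nil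


namespace MaxNT

variable {Δ : Set Form} {ψ : Form} (h : MaxNT Δ ψ)

include h

theorem cl {α : Form} (hd : Deriv' Δ α) : α ∈ Δ := by
  by_contra hα
  obtain ⟨L, hm, hder⟩ := h.max α hα
  classical
  have hL2 : ∀ δ ∈ α :: L.filter (· ∈ Δ), δ = α ∨ δ ∈ Δ := by
    intro δ hδ
    rcases List.mem_cons.1 hδ with h' | h'
    · exact Or.inl h'
    · exact Or.inr (of_decide_eq_true (List.mem_filter.1 h').2)
  have hder2 : Der (α :: L.filter (· ∈ Δ)) ψ := by
    refine hder.weaken ?_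
    intro δ hδ
    rcases hm δ hδ with h' | h'
    · simp [h']
    · exact List.mem_cons_of_mem _ (List.mem_filter.2 ⟨hδ, decide_eq_true h'⟩)
  have himp : Der (L.filter (· ∈ Δ)) (α.imp ψ) := hder2.ded
  have hDψ : Deriv' Δ ψ := by
    obtain ⟨L', hm', hd'⟩ := hd
    refine ⟨L' ++ L.filter (· ∈ Δ), ?_, .mp (himp.weaken ?_) (hd'.weaken ?_)⟩
    · intro δ hδ
      rcases List.mem_append.1 hδ with h' | h'
      · exact hm' δ h'
      · exact of_decide_eq_true (List.mem_filter.1 h').2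
    · intro δ hδ; exact List.mem_append.2 (Or.inr hδ)
    · intro δ hδ; exact List.mem_append.2 (Or.inl hδ)
  exact h.nd hDψ

theorem imp_psi {α : Form} (hα : α ∉ Δ) : Deriv' Δ (α.imp ψ) := by
  obtain ⟨L, hm, hder⟩ := h.max α hα
  classical
  have hder2 : Der (α :: L.filter (· ∈ Δ)) ψ := by
    refine hder.weaken ?_
    intro δ hδ
    rcases hm δ hδ with h' | h'
    · simp [h']
    · exact List.mem_cons_of_mem _ (List.mem_filter.2 ⟨hδ, decide_eq_true h'⟩)
  exact ⟨L.filter (· ∈ Δ), fun δ hδ => of_decide_eq_true (List.mem_filter.1 hδ).2, hder2.ded⟩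

theorem mem_of_mp {α β : Form} (h1 : α.imp β ∈ Δ) (h2 : α ∈ Δ) : β ∈ Δ :=
  h.cl ((Deriv'.of_mem h1).mp (Deriv'.of_mem h2))

theorem and_mem {α β : Form} : α.and β ∈ Δ ↔ α ∈ Δ ∧ β ∈ Δ := by
  constructor
  · intro h1
    exact ⟨h.cl (Deriv'.mp1 (.A4 α β) (.of_mem h1)),
           h.cl (Deriv'.mp1 (.A5 α β) (.of_mem h1))⟩
  · rintro ⟨h1, h2⟩
    exact h.cl (Deriv'.mp2 (.A3 α β) (.of_mem h1) (.of_mem h2))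

theorem or_mem {α β : Form} : α.or β ∈ Δ ↔ α ∈ Δ ∨ β ∈ Δ := by
  constructor
  · intro h1
    by_contra hc
    push_neg at hc
    have d1 : Deriv' Δ (α.imp ψ) := h.imp_psi hc.1
    have d2 : Deriv' Δ (β.imp ψ) := h.imp_psi hc.2
    have d3 : Deriv' Δ ψ :=
      ((Deriv'.mp2 (.A8 α β ψ) d1 d2)).mp (.of_mem h1)
    exact h.nd d3
  · rintro (h1 | h1)
    · exact h.cl (Deriv'.mp1 (.A6 α β) (.of_mem h1))
    · exact h.cl (Deriv'.mp1 (.A7 α β) (.of_mem h1))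

theorem imp_mem {α β : Form} : α.imp β ∈ Δ ↔ (α ∉ Δ ∨ β ∈ Δ) := by
  constructor
  · intro h1
    by_cases hα : α ∈ Δ
    · exact Or.inr (h.mem_of_mp h1 hα)
    · exact Or.inl hα
  · rintro (h1 | h1)
    · by_contra h2
      have d1 : Deriv' Δ (α.imp ψ) := h.imp_psi h1
      have d2 : Deriv' Δ ((α.imp β).imp ψ) := h.imp_psi h2
      exact h.nd (Deriv'.mp2 (taut_peirce α β ψ) d1 d2)
    · exact h.cl (Deriv'.mp1 (.A1 β α) (.of_mem h1))

theorem neg_total {α : Form} (hα : α ∉ Δ) : α.neg ∈ Δ := by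
  have := h.or_mem.1 (h.cl (Deriv'.of_thm (.EM α)))
  tauto

theorem neg_mem {α : Form} : α.neg ∈ Δ ↔ (α ∉ Δ ∨ (α ∈ Δ ∧ α.neg ∈ Δ)) := by
  constructor
  · intro h1; by_cases hα : α ∈ Δ
    · exact Or.inr ⟨hα, h1⟩
    · exact Or.inl hα
  · rintro (h1 | ⟨_, h1⟩)
    · exact h.neg_total h1
    · exact h1

theorem circ_mem {α : Form} (h1 : α.circ ∈ Δ) : ¬ (α ∈ Δ ∧ α.neg ∈ Δ) := by
  rintro ⟨h2, h3⟩
  refine h.nd ?_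
  have d := Deriv'.mp2 (Γ := Δ) (.bc α ψ) (.of_mem h1) (.of_mem h2)
  exact d.mp (.of_mem h3)

end MaxNT

/- ## The canonical model -/

theorem Der.mapObl {L : List Form} {φ : Form} (h : Der L φ) :
    Der (L.map Form.obl) φ.obl := by
  induction h with
  | thm h => exact .thm (.nec h)
  | hyp h => exact .hyp (List.mem_map_of_mem h)
  | mp _ _ ih1 ih2 => exact .mp (.mp (.thm (.OK _ _)) ih1) ih2

theorem obl_lift {Δ : Set Form} {α : Form} (h : Deriv' {β | β.obl ∈ Δ} α) :
    Deriv' Δ α.obl := by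
  obtain ⟨L, hm, hd⟩ := h
  refine ⟨L.map Form.obl, ?_, hd.mapObl⟩
  intro δ hδ
  obtain ⟨ε, hε, rfl⟩ := List.mem_map.1 hδ
  exact hm ε hε

/-- Worlds of the canonical model. -/
def Wld : Type := {Δ : Set Form // ∃ ψ, MaxNT Δ ψ}

open Classical in
/-- Canonical valuation. -/
noncomputable def cv (Δ : Wld) (α : Form) : SV :=
  if α ∈ Δ.1 then (if α.neg ∈ Δ.1 then .t else .T) else .F

/-- Canonical accessibility relation. -/
def cR (Δ Δ' : Wld) : Prop := ∀ α, α.obl ∈ Δ.1 → α ∈ Δ'.1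

theorem cv_p1 {Δ : Wld} {α : Form} : (cv Δ α).p1 = true ↔ α ∈ Δ.1 := by
  unfold cv; split_ifs with h1 h2 <;> simp [SV.p1, h1]

theorem cv_p2 {Δ : Wld} {α : Form} : (cv Δ α).p2 = true ↔ α.neg ∈ Δ.1 := by
  obtain ⟨ψ, h⟩ := Δ.2
  unfold cv
  split_ifs with h1 h2
  · simp [SV.p2, h2]
  · simp [SV.p2, h2]
  · simp [SV.p2, h.neg_total h1]

theorem bool_ext {a b : Bool} (h : (a = true) ↔ (b = true)) : a = b := by
  cases a <;> cases b <;> simp_all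

/-- For every world, the set of O-demanded formulas does not derive ⊥_{p₀}. -/
theorem serial_aux (Δ : Wld) : ¬ Deriv' {β | β.obl ∈ Δ.1} (Form.bot (Form.var 0)) := by
  obtain ⟨ψ, h⟩ := Δ.2
  intro hd
  have h1 : (Form.bot (Form.var 0)).obl ∈ Δ.1 := h.cl (obl_lift hd)
  have h2 : Form.bot (Form.var 0) ∈ Δ.1 :=
    h.cl (Deriv'.mp1 (.OE (Form.var 0)) (.of_mem h1))
  unfold Form.bot at h2
  have h3 := h.and_mem.1 h2
  have h4 := h.and_mem.1 h3.1
  exact h.circ_mem h3.2 h4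

theorem cModel : IsModelDmbC cR cv := by
  constructor
  · -- serial
    intro Δ
    obtain ⟨Δ', hsub, hmax⟩ := lindenbaum (serial_aux Δ)
    exact ⟨⟨Δ', _, hmax⟩, fun α hα => hsub hα⟩
  · -- and
    intro w α β
    obtain ⟨ψ, h⟩ := w.2
    exact bool_ext (by simp [cv_p1, h.and_mem, Bool.and_eq_true])
  · -- or
    intro w α β
    obtain ⟨ψ, h⟩ := w.2
    exact bool_ext (by simp [cv_p1, h.or_mem, Bool.or_eq_true])
  · -- imp
    intro w α β
    obtain ⟨ψ, h⟩ := w.2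
    refine bool_ext ?_
    simp only [cv_p1, Bool.or_eq_true, Bool.not_eq_true']
    rw [h.imp_mem]
    have hf : (cv w α).p1 = false ↔ α ∉ w.1 := by
      rw [Bool.eq_false_iff]; exact not_congr cv_p1
    rw [hf]
  · -- neg
    intro w α
    exact bool_ext (by rw [cv_p1, cv_p2])
  · -- circ
    intro w α
    obtain ⟨ψ, h⟩ := w.2
    cases hc : (cv w α.circ).p1 with
    | false => exact Bool.false_le _
    | true =>
      have h1 : α.circ ∈ w.1 := cv_p1.1 hc
      have h2 := h.circ_mem h1
      have : ((cv w α).p1 && (cv w α).p2) = false := by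
        by_contra hb
        rw [Bool.not_eq_false, Bool.and_eq_true] at hb
        exact h2 ⟨cv_p1.1 hb.1, cv_p2.1 hb.2⟩
      simp [this]
  · -- obl
    intro w α
    obtain ⟨ψ, h⟩ := w.2
    constructor
    · intro h1 w' hw'
      exact cv_p1.2 (hw' α (cv_p1.1 h1))
    · intro h1
      refine cv_p1.2 ?_
      by_contra hno
      have hnd : ¬ Deriv' {β | β.obl ∈ w.1} α := fun hd => hno (h.cl (obl_lift hd))
      obtain ⟨Δ', hsub, hmax⟩ := lindenbaum hnd
      have hR : cR w ⟨Δ', _, hmax⟩ := fun β hβ => hsub hβ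
      have := cv_p1.1 (h1 ⟨Δ', _, hmax⟩ hR)
      exact hmax.nd (Deriv'.of_mem this)

/-- Completeness of DmbC w.r.t. swap Kripke models. -/
theorem DmbC_completeness (Γ : Set Form) (φ : Form) :
    SemDmbC Γ φ → DerivDmbC Γ φ := by
  intro hsem
  rw [deriv_iff]
  by_contra hnd
  obtain ⟨Δ, hΓΔ, hmax⟩ := lindenbaum hnd
  set w0 : Wld := ⟨Δ, _, hmax⟩ with hw0
  have hdes : (cv w0 φ).desig := by
    refine hsem Wld cR cv ⟨w0⟩ cModel w0 ?_
    intro γ hγ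
    exact cv_p1.2 (hΓΔ hγ)
  exact hmax.nd (Deriv'.of_mem (cv_p1.1 hdes))
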